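/- A group G is right-orderable (admits a total order compatible with right multiplication) if and only if {a} ∉ D(G) for every a ∈ G \ {e}, where D(G) is the inductive family: S ∈ D(G) if S ∩ S⁻¹ ≠ ∅, closed under T ∪ {a}, T ∪ {b} ∈ D(G) ⟹ T ∪ {a*b} ∈ D(G). -/
import Mathlib

/-- The inductive family `D(G)` of subsets of a group `G`: a set is in `D(G)` if it meets
its own set of inverses, and the family is closed under the rule
`T ∪ {a}, T ∪ {b} ∈ D(G) ⟹ T ∪ {a*b} ∈ D(G)`. -/
inductive RightD {G : Type*} [Group G] : Set G → Prop
  | base (S : Set G) (a : G) (ha : a ∈ S) (hinv : a⁻¹ ∈ S) : RightD S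
  | step (T : Set G) (a b : G) (h1 : RightD (T ∪ {a})) (h2 : RightD (T ∪ {b})) :
      RightD (T ∪ {a * b})

set_option linter.unusedSectionVars false

section AuxRightD
variable {G : Type*} [Group G]

open Classical in
theorem rightD_mono : ∀ {S T : Set G}, RightD S → S ⊆ T → RightD T := by
  intro S T h
  induction h generalizing T with
  | base S a ha hinv => exact fun hsub => RightD.base T a (hsub ha) (hsub hinv)
  | step T₀ a b h1 h2 ih1 ih2 =>
    intro hsub
    have hT₀ : T₀ ⊆ T := fun x hx => hsub (Set.mem_union_left _ hx)
    have hab : a * b ∈ T := hsub (Set.mem_union_right _ rfl)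
    have h1' : RightD (T ∪ {a}) := ih1 (Set.union_subset_union_left _ hT₀)
    have h2' : RightD (T ∪ {b}) := ih2 (Set.union_subset_union_left _ hT₀)
    have := RightD.step T a b h1' h2'
    rwa [Set.union_eq_self_of_subset_right (Set.singleton_subset_iff.2 hab)] at this

/-- `x` is a product of a nonempty word with letters in `S`. -/
def WProd (S : Set G) (x : G) : Prop :=
  ∃ l : List G, l ≠ [] ∧ (∀ y ∈ l, y ∈ S) ∧ l.prod = x

theorem WProd.mono {S T : Set G} {x : G} (h : WProd S x) (hst : S ⊆ T) : WProd T x := by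
  obtain ⟨l, h1, h2, h3⟩ := h
  exact ⟨l, h1, fun y hy => hst (h2 y hy), h3⟩

theorem WProd.single {S : Set G} {x : G} (h : x ∈ S) : WProd S x :=
  ⟨[x], by simp, by simp [h], by simp⟩

theorem WProd.mul {S : Set G} {x y : G} (hx : WProd S x) (hy : WProd S y) :
    WProd S (x * y) := by
  obtain ⟨l, h1, h2, h3⟩ := hx
  obtain ⟨m, g1, g2, g3⟩ := hy
  refine ⟨l ++ m, by simp [h1], ?_, by simp [h3, g3]⟩
  intro z hz
  rcases List.mem_append.1 hz with h | h
  · exact h2 z h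
  · exact g2 z h

theorem not_wprod_empty : ¬ WProd (∅ : Set G) 1 := by
  rintro ⟨l, h1, h2, h3⟩
  cases l with
  | nil => exact h1 rfl
  | cons a t => exact h2 a (by simp)

/-- If `1` is a nonempty product of elements of `S`, then `S ∈ D(G)`. -/
theorem semi_aux : ∀ (n : ℕ) (l : List G) (S : Set G), l.length ≤ n → l ≠ [] →
    (∀ y ∈ l, y ∈ S) → l.prod = 1 → RightD S := by
  intro n
  induction n with
  | zero => intro l S hl hne; cases l with
    | nil => exact absurd rfl hne
    | cons a t => simp at hl
  | succ n ih =>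
    intro l S hl hne hmem hprod
    match l with
    | [a] =>
      have ha : a ∈ S := hmem a (by simp)
      have h1 : a = 1 := by simpa using hprod
      subst h1
      exact RightD.base S 1 ha (by simpa using ha)
    | a :: b :: r =>
      have hmem' : ∀ y ∈ (a * b) :: r, y ∈ S ∪ {a * b} := by
        intro y hy
        rcases List.mem_cons.1 hy with h | h
        · exact Set.mem_union_right _ (by simp [h])
        · exact Set.mem_union_left _ (hmem y (by simp [h]))
      have hlen : ((a * b) :: r).length ≤ n := by
        simp only [List.length_cons] at hl ⊢; omega
      have hprod' : ((a * b) :: r).prod = 1 := by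
        simp only [List.prod_cons] at hprod ⊢
        rw [mul_assoc]; exact hprod
      have h1 : RightD (S ∪ {a * b}) := ih _ _ hlen (by simp) hmem' hprod'
      have hb : b ∈ S := hmem b (by simp)
      have h2 : RightD (S ∪ {b⁻¹}) :=
        RightD.base _ b (Set.mem_union_left _ hb) (Set.mem_union_right _ rfl)
      have h3 := RightD.step S (a * b) b⁻¹ h1 h2
      rw [mul_inv_cancel_right] at h3
      rwa [Set.union_eq_self_of_subset_right
        (Set.singleton_subset_iff.2 (hmem a (by simp)))] at h3

theorem semi {S : Set G} (h : WProd S 1) : RightD S := by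
  obtain ⟨l, h1, h2, h3⟩ := h
  exact semi_aux l.length l S le_rfl h1 h2 h3

/-- product of a nonempty word each of whose letters can be adjoined to `Γ`. -/
theorem prodCtx (Γ : Set G) : ∀ l : List G, l ≠ [] →
    (∀ x ∈ l, RightD (Γ ∪ {x})) → RightD (Γ ∪ {l.prod}) := by
  intro l
  induction l with
  | nil => intro h; exact absurd rfl h
  | cons a t ih =>
    intro _ hmem
    cases t with
    | nil => simpa using hmem a (by simp)
    | cons b r =>
      have h1 : RightD (Γ ∪ {a}) := hmem a (by simp)
      have h2 : RightD (Γ ∪ {(b :: r).prod}) := by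
        refine ih (by simp) ?_
        intro x hx; exact hmem x (by simp [hx])
      have := RightD.step Γ a (b :: r).prod h1 h2
      simpa using this


def sgn (ε : G → Bool) (g : G) : G := if ε g then g else g⁻¹

def sgnSet (ε : G → Bool) (F : Set G) : Set G := sgn ε '' F

theorem sgn_ne_one {ε : G → Bool} {g : G} (h : g ≠ 1) : sgn (G := G) ε g ≠ 1 := by
  unfold sgn; split
  · exact h
  · simpa using h

theorem sgn_congr {ε ε' : G → Bool} {g : G} (h : ε g = ε' g) :
    sgn (G := G) ε g = sgn ε' g := by
  unfold sgn; rw [h]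

/-- Core step: a relation over `Γ ∪ Bη` with all inverses adjoinable forces `RightD Γ`. -/
theorem body {Γ Bη : Set G}
    (hΓ1 : ∀ γ ∈ Γ, γ ≠ (1 : G))
    (hinvB : ∀ z ∈ Bη, RightD (Γ ∪ {z⁻¹}))
    (hnB : ¬ WProd Bη 1)
    (hrel : WProd (Γ ∪ Bη) 1) : RightD Γ := by
  have hinvΓ : ∀ γ ∈ Γ, RightD (Γ ∪ {γ⁻¹}) := fun γ hγ =>
    RightD.base _ γ (Set.mem_union_left _ hγ) (Set.mem_union_right _ rfl)
  obtain ⟨l, hne, hmem, hprod⟩ := hrel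
  by_cases hex : ∃ y ∈ l, y ∈ Γ
  · obtain ⟨y, hyl, hyΓ⟩ := hex
    obtain ⟨l₁, l₂, rfl⟩ := List.append_of_mem hyl
    rw [List.prod_append, List.prod_cons] at hprod
    have hyq : y * l₂.prod = l₁.prod⁻¹ := eq_inv_of_mul_eq_one_right hprod
    have hy : y = l₁.prod⁻¹ * l₂.prod⁻¹ := eq_mul_inv_of_mul_eq hyq
    set u : List G := (l₁.map (fun x => x⁻¹)).reverse ++ (l₂.map (fun x => x⁻¹)).reverse
      with hu
    have huprod : u.prod = y := by
      rw [hu, List.prod_append, ← List.prod_inv_reverse, ← List.prod_inv_reverse, ← hy]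
    have hune : u ≠ [] := by
      intro h0
      rcases List.append_eq_nil_iff.1 (hu ▸ h0) with ⟨h1, h2⟩
      have e1 : l₁ = [] := by simpa using h1
      have e2 : l₂ = [] := by simpa using h2
      rw [e1, e2] at hy
      simp at hy
      exact hΓ1 y hyΓ hy
    have hlet : ∀ x ∈ u, RightD (Γ ∪ {x}) := by
      intro x hx
      have : ∃ z ∈ l₁ ++ y :: l₂, x = z⁻¹ := by
        rcases List.mem_append.1 (hu ▸ hx) with h | h
        · obtain ⟨z, hz, rfl⟩ := List.mem_map.1 (List.mem_reverse.1 h)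
          exact ⟨z, by simp [hz], rfl⟩
        · obtain ⟨z, hz, rfl⟩ := List.mem_map.1 (List.mem_reverse.1 h)
          exact ⟨z, by simp [hz], rfl⟩
      obtain ⟨z, hz, rfl⟩ := this
      rcases hmem z hz with h | h
      · exact hinvΓ z h
      · exact hinvB z h
    have := prodCtx Γ u hune hlet
    rw [huprod] at this
    rwa [Set.union_eq_self_of_subset_right (Set.singleton_subset_iff.2 hyΓ)] at this
  · push_neg at hex
    refine absurd ⟨l, hne, fun y hy => ?_, hprod⟩ hnB
    rcases hmem y hy with h | h
    · exact absurd h (hex y hy)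
    · exact h

open Classical in
theorem TT : ∀ (n : ℕ) (F : Finset G), F.card ≤ n → (∀ g ∈ F, g ≠ (1 : G)) →
    (∀ ε : G → Bool, WProd (sgnSet ε ↑F) 1) → ∃ c : G, c ≠ 1 ∧ RightD ({c} : Set G) := by
  intro n
  induction n with
  | zero =>
    intro F hcard _ hall
    have hF : F = ∅ := Finset.card_eq_zero.mp (Nat.le_zero.mp hcard)
    refine absurd (hall fun _ => true) ?_
    rw [hF]
    simpa [sgnSet] using not_wprod_empty (G := G)
  | succ n IH =>
    intro F hcard hne1 hall
    by_contra hw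
    push_neg at hw
    rcases F.eq_empty_or_nonempty with hF | ⟨g₀, hg₀⟩
    · refine absurd (hall fun _ => true) ?_
      rw [hF]
      simpa [sgnSet] using not_wprod_empty (G := G)
    have DC : ∀ (m : ℕ) (A : Finset G) (δ : G → Bool), A.Nonempty → A ⊆ F →
        (F \ A).card ≤ m → RightD (sgnSet δ ↑A) := by
      intro m
      induction m with
      | zero =>
        intro A δ hAne hAF hc
        have hBe : F \ A = ∅ := Finset.card_eq_zero.mp (Nat.le_zero.mp hc)
        have hFA : F = A :=
          Finset.Subset.antisymm (Finset.sdiff_eq_empty_iff_subset.mp hBe) hAF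
        refine body ?_ (Bη := ∅) (by simp) not_wprod_empty ?_
        · rintro γ ⟨a, ha, rfl⟩
          exact sgn_ne_one (hne1 a (hAF ha))
        · rw [Set.union_empty]
          have := hall δ
          rwa [hFA] at this
      | succ m ihm =>
        intro A δ hAne hAF hc
        set B : Finset G := F \ A with hB
        by_cases hBe : B = ∅
        · -- same as zero case
          have hFA : F = A :=
            Finset.Subset.antisymm (Finset.sdiff_eq_empty_iff_subset.mp hBe) hAF
          refine body ?_ (Bη := ∅) (by simp) not_wprod_empty ?_
          · rintro γ ⟨a, ha, rfl⟩
            exact sgn_ne_one (hne1 a (hAF ha))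
          · rw [Set.union_empty]
            have := hall δ
            rwa [hFA] at this
        · have hBne1 : ∀ g ∈ B, g ≠ (1 : G) := fun g hg =>
            hne1 g (Finset.mem_sdiff.1 hg).1
          have hBcard : B.card ≤ n := by
            have h1 : B ⊂ F := Finset.sdiff_ssubset hAF hAne
            have := Finset.card_lt_card h1
            omega
          obtain ⟨η, hη⟩ : ∃ η : G → Bool, ¬ WProd (sgnSet η ↑B) 1 := by
            by_contra hcon
            push_neg at hcon
            obtain ⟨c, hc1, hc2⟩ := IH B hBcard hBne1 hcon
            exact hw c hc1 hc2
          set ε : G → Bool := fun g => if g ∈ A then δ g else η g with hε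
          have hrel := hall ε
          have hsplit : sgnSet ε ↑F = sgnSet δ ↑A ∪ sgnSet η ↑B := by
            have hFAB : F = A ∪ B := (Finset.union_sdiff_of_subset hAF).symm
            rw [hFAB, Finset.coe_union]
            unfold sgnSet
            rw [Set.image_union]
            congr 1
            · refine Set.image_congr fun x hx => sgn_congr ?_
              have hxA : x ∈ A := by exact_mod_cast hx
              simp [hε, hxA]
            · refine Set.image_congr fun x hx => sgn_congr ?_
              have hxB : x ∈ B := by exact_mod_cast hx
              have hxA : x ∉ A := (Finset.mem_sdiff.1 hxB).2
              simp [hε, hxA]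
          rw [hsplit] at hrel
          refine body ?_ ?_ hη hrel
          · rintro γ ⟨a, ha, rfl⟩
            exact sgn_ne_one (hne1 a (hAF (by exact_mod_cast ha)))
          · rintro z ⟨h, hh, rfl⟩
            have hhB : h ∈ B := by exact_mod_cast hh
            have hhF : h ∈ F := (Finset.mem_sdiff.1 hhB).1
            have hhA : h ∉ A := (Finset.mem_sdiff.1 hhB).2
            set δ' : G → Bool := fun x => if x = h then !(η h) else δ x with hδ'
            have hres : RightD (sgnSet δ' ↑(insert h A)) := by
              refine ihm (insert h A) δ' ⟨h, Finset.mem_insert_self h A⟩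
                (Finset.insert_subset hhF hAF) ?_
              have he : F \ insert h A = (F \ A).erase h := by
                ext x
                simp only [Finset.mem_sdiff, Finset.mem_insert, Finset.mem_erase]
                tauto
              rw [he, Finset.card_erase_of_mem hhB]
              omega
            have hset : sgnSet δ' ↑(insert h A) = sgnSet δ ↑A ∪ {(sgn η h)⁻¹} := by
              rw [Finset.coe_insert]
              unfold sgnSet
              rw [Set.image_insert_eq, Set.union_singleton]
              congr 1
              · unfold sgn
                simp only [hδ', if_pos rfl]
                cases hcase : η h <;> simp [hcase]
              · refine Set.image_congr fun x hx => sgn_congr ?_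
                have hxA : x ∈ A := by exact_mod_cast hx
                have : x ≠ h := fun hxe => hhA (hxe ▸ hxA)
                simp [hδ', this]
            rwa [hset] at hres
    have hDD := DC (F \ {g₀}).card {g₀} (fun _ => true) ⟨g₀, Finset.mem_singleton_self g₀⟩
      (Finset.singleton_subset_iff.2 hg₀) le_rfl
    have hone : sgnSet (fun _ => true) (↑({g₀} : Finset G)) = ({g₀} : Set G) := by
      rw [Finset.coe_singleton]
      unfold sgnSet sgn
      simp
    rw [hone] at hDD
    exact hw g₀ (hne1 g₀ hg₀) hDD

def Good (P : Set G) : Prop :=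
  (∀ x ∈ P, x ≠ (1 : G)) ∧
  ∀ F : Finset G, (∀ g ∈ F, g ≠ (1 : G)) → ∃ ε : G → Bool, ¬ WProd (P ∪ sgnSet ε ↑F) 1

theorem chain_finset_subset {c : Set (Set G)} (hc : IsChain (· ⊆ ·) c) (hne : c.Nonempty) :
    ∀ s : Finset G, ↑s ⊆ ⋃₀ c → ∃ t ∈ c, ↑s ⊆ t := by
  classical
  intro s
  induction s using Finset.induction_on with
  | empty =>
    intro _
    exact ⟨hne.choose, hne.choose_spec, by simp⟩
  | @insert a s ha ih =>
    intro hsub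
    rw [Finset.coe_insert] at hsub
    obtain ⟨t₁, ht₁c, ht₁⟩ := ih (fun x hx => hsub (Set.mem_insert_of_mem _ hx))
    obtain ⟨t₂, ht₂c, ht₂⟩ := hsub (Set.mem_insert a ↑s)
    rw [Finset.coe_insert]
    rcases eq_or_ne t₁ t₂ with rfl | hne12
    · exact ⟨t₁, ht₁c, Set.insert_subset ht₂ ht₁⟩
    rcases hc ht₁c ht₂c hne12 with h | h
    · exact ⟨t₂, ht₂c, Set.insert_subset ht₂ (ht₁.trans h)⟩
    · exact ⟨t₁, ht₁c, Set.insert_subset (h ht₂) ht₁⟩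

open Classical in
theorem exists_cone
    (hfsc : ∀ F : Finset G, (∀ g ∈ F, g ≠ (1 : G)) →
      ∃ ε : G → Bool, ¬ WProd (sgnSet ε ↑F) 1) :
    ∃ M : Set G, ¬ WProd M 1 ∧ ∀ g : G, g ≠ 1 → g ∈ M ∨ g⁻¹ ∈ M := by
  have hgoodEmpty : Good (∅ : Set G) := by
    refine ⟨by simp, fun F hF => ?_⟩
    obtain ⟨ε, hε⟩ := hfsc F hF
    exact ⟨ε, by simpa using hε⟩
  have hchains : ∀ c ⊆ {P : Set G | Good P}, IsChain (· ⊆ ·) c → c.Nonempty →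
      ∃ ub ∈ {P : Set G | Good P}, ∀ s ∈ c, s ⊆ ub := by
    intro c hcS hc hcne
    refine ⟨⋃₀ c, ⟨?_, ?_⟩, fun s hs => Set.subset_sUnion_of_mem hs⟩
    · rintro x ⟨P, hPc, hxP⟩
      exact (hcS hPc).1 x hxP
    · intro F hF
      by_contra hcon
      push_neg at hcon
      -- for every restricted sign choice, a word
      set εext : ({x // x ∈ F} → Bool) → G → Bool :=
        fun σ g => if hg : g ∈ F then σ ⟨g, hg⟩ else true with hεext
      have hword : ∀ σ : {x // x ∈ F} → Bool, ∃ l : List G, l ≠ [] ∧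
          (∀ y ∈ l, y ∈ ⋃₀ c ∪ sgnSet (εext σ) ↑F) ∧ l.prod = 1 := fun σ => by
        exact hcon (εext σ)
      choose L hL1 hL2 hL3 using hword
      set s : Set G := ⋃ σ : {x // x ∈ F} → Bool,
        {y | y ∈ L σ ∧ y ∉ sgnSet (εext σ) ↑F} with hsdef
      have hsfin : s.Finite := by
        refine Set.finite_iUnion fun σ => ?_
        exact (L σ).finite_toSet.subset fun y hy => hy.1
      have hssub : s ⊆ ⋃₀ c := by
        rintro y ⟨Sy, ⟨σ, rfl⟩, hy2⟩
        rcases hL2 σ y hy2.1 with h | h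
        · exact h
        · exact absurd h hy2.2
      obtain ⟨t, htc, hts'⟩ := chain_finset_subset hc hcne hsfin.toFinset
        (by rwa [Set.Finite.coe_toFinset])
      have hts : s ⊆ t := by rwa [Set.Finite.coe_toFinset] at hts'
      obtain ⟨ε, hε⟩ := (hcS htc).2 F hF
      set σ : {x // x ∈ F} → Bool := fun x => ε x.1 with hσ
      have hagree : sgnSet (εext σ) (↑F : Set G) = sgnSet ε ↑F := by
        refine Set.image_congr fun x hx => sgn_congr ?_
        have hxF : x ∈ F := by exact_mod_cast hx
        simp [hεext, hσ, hxF]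
      refine hε ⟨L σ, hL1 σ, ?_, hL3 σ⟩
      intro y hy
      by_cases hyim : y ∈ sgnSet (εext σ) (↑F : Set G)
      · exact Set.mem_union_right _ (hagree ▸ hyim)
      · have : y ∈ s := Set.mem_iUnion.2 ⟨σ, hy, hyim⟩
        exact Set.mem_union_left _ (hts this)
  obtain ⟨M, -, hMGood, hMmax⟩ :
      ∃ M, (∅ : Set G) ⊆ M ∧ Good M ∧ ∀ a, Good a → M ⊆ a → a ⊆ M := by
    obtain ⟨M, hM1, hM2⟩ := zorn_subset_nonempty {P : Set G | Good P} hchains ∅ hgoodEmpty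
    exact ⟨M, hM1, hM2.1, fun a ha hMa => hM2.2 ha hMa⟩
  have hM2 : ¬ WProd M 1 := by
    obtain ⟨ε, hε⟩ := hMGood.2 ∅ (by simp)
    simpa [sgnSet] using hε
  refine ⟨M, hM2, ?_⟩
  intro g hg1
  by_contra hcon
  push_neg at hcon
  obtain ⟨hgM, hginvM⟩ := hcon
  have hnotgood : ∀ x : G, x ≠ 1 → x ∉ M → ∃ F : Finset G, (∀ g' ∈ F, g' ≠ (1 : G)) ∧
      ∀ ε : G → Bool, WProd ((M ∪ {x}) ∪ sgnSet ε ↑F) 1 := by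
    intro x hx1 hxM
    have hng : ¬ Good (M ∪ {x}) := by
      intro hgood
      have := hMmax _ hgood Set.subset_union_left
      exact hxM (this (Set.mem_union_right _ rfl))
    rcases not_and_or.1 hng with h | h
    · exfalso
      apply h
      rintro y (hy | hy)
      · exact hMGood.1 y hy
      · rwa [Set.mem_singleton_iff.1 hy]
    · push_neg at h
      obtain ⟨F, hF1, hF2⟩ := h
      exact ⟨F, hF1, hF2⟩
  obtain ⟨F₁, hF₁1, hF₁2⟩ := hnotgood g hg1 hgM
  obtain ⟨F₂, hF₂1, hF₂2⟩ := hnotgood g⁻¹ (inv_ne_one.2 hg1) hginvM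
  set F : Finset G := insert g (F₁ ∪ F₂) with hF
  have hFne1 : ∀ g' ∈ F, g' ≠ (1 : G) := by
    intro g' hg'
    rcases Finset.mem_insert.1 hg' with rfl | hg'
    · exact hg1
    rcases Finset.mem_union.1 hg' with h | h
    · exact hF₁1 g' h
    · exact hF₂1 g' h
  obtain ⟨ε, hε⟩ := hMGood.2 F hFne1
  have hgF : g ∈ F := Finset.mem_insert_self _ _
  cases hcase : ε g with
  | true =>
    have hgin : g ∈ sgnSet ε (↑F : Set G) :=
      ⟨g, by exact_mod_cast hgF, by simp [sgn, hcase]⟩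
    refine hε ((hF₁2 ε).mono ?_)
    rintro y ((hy | hy) | hy)
    · exact Set.mem_union_left _ hy
    · rw [Set.mem_singleton_iff.1 hy]; exact Set.mem_union_right _ hgin
    · refine Set.mem_union_right _ ?_
      obtain ⟨z, hz, rfl⟩ := hy
      exact ⟨z, by
        have : z ∈ F₁ := by exact_mod_cast hz
        exact_mod_cast Finset.mem_insert_of_mem (Finset.mem_union_left _ this), rfl⟩
  | false =>
    have hgin : g⁻¹ ∈ sgnSet ε (↑F : Set G) :=
      ⟨g, by exact_mod_cast hgF, by simp [sgn, hcase]⟩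
    refine hε ((hF₂2 ε).mono ?_)
    rintro y ((hy | hy) | hy)
    · exact Set.mem_union_left _ hy
    · rw [Set.mem_singleton_iff.1 hy]; exact Set.mem_union_right _ hgin
    · refine Set.mem_union_right _ ?_
      obtain ⟨z, hz, rfl⟩ := hy
      exact ⟨z, by
        have : z ∈ F₂ := by exact_mod_cast hz
        exact_mod_cast Finset.mem_insert_of_mem (Finset.mem_union_right _ this), rfl⟩

theorem order_of_cone {M : Set G} (hM2 : ¬ WProd M 1)
    (hM3 : ∀ g : G, g ≠ 1 → g ∈ M ∨ g⁻¹ ∈ M) :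
    ∃ le : G → G → Prop, (∀ a : G, le a a) ∧
      (∀ a b : G, le a b → le b a → a = b) ∧
      (∀ a b c : G, le a b → le b c → le a c) ∧
      (∀ a b : G, le a b ∨ le b a) ∧
      (∀ a b c : G, le a b → le (a * c) (b * c)) := by
  refine ⟨fun a b => a = b ∨ WProd M (b * a⁻¹), fun a => Or.inl rfl, ?_, ?_, ?_, ?_⟩
  · -- antisymm
    intro a b hab hba
    rcases hab with h | h
    · exact h
    rcases hba with h' | h'
    · exact h'.symm
    exfalso
    apply hM2
    have hm := h.mul h'
    have key : b * a⁻¹ * (a * b⁻¹) = 1 := by group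
    rwa [key] at hm
  · -- trans
    intro a b c hab hbc
    rcases hab with rfl | h1
    · exact hbc
    rcases hbc with rfl | h2
    · exact Or.inr h1
    refine Or.inr ?_
    have hm := h2.mul h1
    have key : c * b⁻¹ * (b * a⁻¹) = c * a⁻¹ := by group
    rwa [key] at hm
  · -- total
    intro a b
    by_cases hab : a = b
    · exact Or.inl (Or.inl hab)
    have hne : b * a⁻¹ ≠ 1 := by
      intro h
      exact hab (mul_inv_eq_one.1 h).symm
    rcases hM3 _ hne with h | h
    · exact Or.inl (Or.inr (WProd.single h))
    · refine Or.inr (Or.inr ?_)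
      rw [mul_inv_rev, inv_inv] at h
      exact WProd.single h
  · -- compat
    intro a b c hab
    rcases hab with rfl | h
    · exact Or.inl rfl
    refine Or.inr ?_
    have key : b * c * (a * c)⁻¹ = b * a⁻¹ := by group
    rw [key]
    exact h

theorem forward_dir (le : G → G → Prop)
    (hanti : ∀ a b : G, le a b → le b a → a = b)
    (htrans : ∀ a b c : G, le a b → le b c → le a c)
    (htot : ∀ a b : G, le a b ∨ le b a)
    (hcomp : ∀ a b c : G, le a b → le (a * c) (b * c)) :
    ∀ a : G, a ≠ 1 → ¬ RightD ({a} : Set G) := by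
  have key : ∀ S : Set G, RightD S → (∃ x ∈ S, le x 1) ∧ (∃ x ∈ S, le 1 x) := by
    intro S h
    induction h with
    | base S a ha hinv =>
      rcases htot a 1 with h | h
      · refine ⟨⟨a, ha, h⟩, ⟨a⁻¹, hinv, ?_⟩⟩
        have h2 := hcomp a 1 a⁻¹ h
        simpa using h2
      · refine ⟨⟨a⁻¹, hinv, ?_⟩, ⟨a, ha, h⟩⟩
        have h2 := hcomp 1 a a⁻¹ h
        simpa using h2
    | step T a b h1 h2 ih1 ih2 =>
      obtain ⟨⟨x1, hx1, hle1⟩, ⟨y1, hy1, hge1⟩⟩ := ih1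
      obtain ⟨⟨x2, hx2, hle2⟩, ⟨y2, hy2, hge2⟩⟩ := ih2
      constructor
      · rcases hx1 with h | h
        · exact ⟨x1, Set.mem_union_left _ h, hle1⟩
        rcases hx2 with h' | h'
        · exact ⟨x2, Set.mem_union_left _ h', hle2⟩
        refine ⟨a * b, Set.mem_union_right _ rfl, ?_⟩
        rw [Set.mem_singleton_iff.1 h] at hle1
        rw [Set.mem_singleton_iff.1 h'] at hle2
        have h3 := hcomp a 1 b hle1
        rw [one_mul] at h3
        exact htrans _ _ _ h3 hle2
      · rcases hy1 with h | h
        · exact ⟨y1, Set.mem_union_left _ h, hge1⟩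
        rcases hy2 with h' | h'
        · exact ⟨y2, Set.mem_union_left _ h', hge2⟩
        refine ⟨a * b, Set.mem_union_right _ rfl, ?_⟩
        rw [Set.mem_singleton_iff.1 h] at hge1
        rw [Set.mem_singleton_iff.1 h'] at hge2
        have h3 := hcomp 1 a b hge1
        rw [one_mul] at h3
        exact htrans _ _ _ hge2 h3
  intro a ha hD
  obtain ⟨⟨x, hx, hxle⟩, ⟨y, hy, hyge⟩⟩ := key _ hD
  rw [Set.mem_singleton_iff.1 hx] at hxle
  rw [Set.mem_singleton_iff.1 hy] at hyge
  exact ha (hanti a 1 hxle hyge)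


theorem reverse_dir (H : ∀ a : G, a ≠ 1 → ¬ RightD ({a} : Set G)) :
    ∃ le : G → G → Prop, (∀ a : G, le a a) ∧
      (∀ a b : G, le a b → le b a → a = b) ∧
      (∀ a b c : G, le a b → le b c → le a c) ∧
      (∀ a b : G, le a b ∨ le b a) ∧
      (∀ a b c : G, le a b → le (a * c) (b * c)) := by
  have hfsc : ∀ F : Finset G, (∀ g ∈ F, g ≠ (1 : G)) →
      ∃ ε : G → Bool, ¬ WProd (sgnSet ε ↑F) 1 := by
    intro F h1
    by_contra hcon
    push_neg at hcon
    obtain ⟨c, hc1, hc2⟩ := TT F.card F le_rfl h1 hcon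
    exact H c hc1 hc2
  obtain ⟨M, hM2, hM3⟩ := exists_cone hfsc
  exact order_of_cone hM2 hM3

end AuxRightD

theorem stmt12 {G : Type*} [Group G] :
    (∃ le : G → G → Prop, (∀ a : G, le a a) ∧
      (∀ a b : G, le a b → le b a → a = b) ∧
      (∀ a b c : G, le a b → le b c → le a c) ∧
      (∀ a b : G, le a b ∨ le b a) ∧
      (∀ a b c : G, le a b → le (a * c) (b * c))) ↔
    (∀ a : G, a ≠ 1 → ¬ RightD ({a} : Set G)) := by
  constructor
  · rintro ⟨le, _, hanti, htrans, htot, hcomp⟩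
    exact forward_dir le hanti htrans htot hcomp
  · exact reverse_dir
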